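/- Fix b ∈ [p,q] and define B_1(λ) = ∫_0^1 B'(t(λ−b)+b) dt. Then B_1(λ) = (B(λ)−B(b))/(λ−b) for all λ ∈ [p,q] with λ ≠ b, B_1 is of class C^{N−1} on [p,q], and ε·(−1)^{1+m} B_1^{(m)}(λ) < 0 for all λ ∈ [p,q] and all 0 ≤ m ≤ N−1. -/

import Mathlib

open Set MeasureTheory intervalIntegral

/-- auxiliary: the affine point `t*(x-b)+b` stays in a convex set containing `b` and `x`. -/
private lemma aff_mem_of_convex {s : Set ℝ} (hc : Convex ℝ s) {b x t : ℝ}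
    (hb : b ∈ s) (hx : x ∈ s) (ht : t ∈ Set.Icc (0:ℝ) 1) : t * (x - b) + b ∈ s := by
  have h := hc.add_smul_sub_mem hb hx ht
  have he : t * (x - b) + b = b + t • (x - b) := by simp [smul_eq_mul]; ring
  rwa [he]

private lemma aff_hasDerivAt (t b x : ℝ) :
    HasDerivAt (fun x : ℝ => t * (x - b) + b) t x := by
  simpa using (((hasDerivAt_id x).sub_const b).const_mul t).add_const b

private lemma exists_delta_K {u v b x₀ : ℝ} (hb : b ∈ Set.Ioo u v) (hx₀ : x₀ ∈ Set.Ioo u v) :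
    ∃ δ > (0:ℝ), ∃ K : Set ℝ, IsCompact K ∧ Convex ℝ K ∧ K ⊆ Set.Ioo u v ∧ b ∈ K ∧
      Metric.ball x₀ δ ⊆ K := by
  obtain ⟨δ, hδ, hball⟩ := Metric.isOpen_iff.mp isOpen_Ioo x₀ hx₀
  have hl : x₀ - δ/2 ∈ Set.Ioo u v := by
    apply hball; rw [Metric.mem_ball, Real.dist_eq]
    rw [show x₀ - δ/2 - x₀ = -(δ/2) by ring, abs_neg, abs_of_pos (by linarith)]; linarith
  have hr : x₀ + δ/2 ∈ Set.Ioo u v := by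
    apply hball; rw [Metric.mem_ball, Real.dist_eq]
    rw [show x₀ + δ/2 - x₀ = δ/2 by ring, abs_of_pos (by linarith)]; linarith
  refine ⟨δ/2, by linarith, Set.Icc (min b (x₀ - δ/2)) (max b (x₀ + δ/2)), isCompact_Icc,
    convex_Icc _ _, ?_, ⟨min_le_left _ _, le_max_left _ _⟩, ?_⟩
  · exact Set.Icc_subset_Ioo (lt_min hb.1 hl.1) (max_lt hb.2 hr.2)
  · intro x hx
    rw [Metric.mem_ball, Real.dist_eq, abs_lt] at hx
    exact ⟨(min_le_right _ _).trans (by linarith), (by linarith : x ≤ x₀ + δ/2).trans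
      (le_max_right _ _)⟩

private lemma integrand_contOn {u v b : ℝ} (hb : b ∈ Set.Ioo u v) {χ : ℝ → ℝ}
    (hχ : ContinuousOn χ (Set.Ioo u v)) (k : ℕ) {x : ℝ} (hx : x ∈ Set.Ioo u v) :
    ContinuousOn (fun t => t ^ k * χ (t * (x - b) + b)) (Set.Icc (0:ℝ) 1) := by
  apply ContinuousOn.mul (by fun_prop)
  apply hχ.comp (by fun_prop)
  intro t ht
  exact aff_mem_of_convex (convex_Ioo u v) hb hx ht

private lemma integrand_meas {u v b : ℝ} (hb : b ∈ Set.Ioo u v) {χ : ℝ → ℝ}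
    (hχ : ContinuousOn χ (Set.Ioo u v)) (k : ℕ) {x : ℝ} (hx : x ∈ Set.Ioo u v) :
    AEStronglyMeasurable (fun t => t ^ k * χ (t * (x - b) + b))
      (volume.restrict (Set.uIoc (0:ℝ) 1)) := by
  rw [Set.uIoc_of_le (zero_le_one)]
  exact ((integrand_contOn hb hχ k hx).mono Set.Ioc_subset_Icc_self).aestronglyMeasurable
    measurableSet_Ioc

/-- Continuity of the parametric integral. -/
private lemma paramContinuousAt {u v b : ℝ} (hb : b ∈ Set.Ioo u v) {φ : ℝ → ℝ}
    (hφc : ContinuousOn φ (Set.Ioo u v)) (m : ℕ) {x₀ : ℝ} (hx₀ : x₀ ∈ Set.Ioo u v) :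
    ContinuousAt (fun x => ∫ t in (0:ℝ)..1, t ^ m * φ (t * (x - b) + b)) x₀ := by
  obtain ⟨δ, hδ, K, hKc, hKconv, hKsub, hbK, hballK⟩ := exists_delta_K hb hx₀
  obtain ⟨C, hC⟩ := hKc.exists_bound_of_continuousOn (hφc.mono hKsub)
  apply intervalIntegral.continuousAt_of_dominated_interval (bound := fun _ => C)
  · filter_upwards [Metric.ball_mem_nhds x₀ hδ] with x hx
    exact integrand_meas hb hφc m (hKsub (hballK hx))
  · filter_upwards [Metric.ball_mem_nhds x₀ hδ] with x hx
    filter_upwards with t ht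
    rw [Set.uIoc_of_le (zero_le_one)] at ht
    have hy : t * (x - b) + b ∈ K :=
      aff_mem_of_convex hKconv hbK (hballK hx) ⟨ht.1.le, ht.2⟩
    have h1 : |t| ≤ 1 := abs_le.mpr ⟨by linarith [ht.1], ht.2⟩
    have h2 : ‖φ (t * (x - b) + b)‖ ≤ C := hC _ hy
    have h3 : (0:ℝ) ≤ C := le_trans (norm_nonneg _) h2
    calc ‖t ^ m * φ (t * (x - b) + b)‖ = |t| ^ m * ‖φ (t * (x - b) + b)‖ := by
          rw [norm_mul, Real.norm_eq_abs, abs_pow]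
      _ ≤ 1 * C := by
          apply mul_le_mul (pow_le_one₀ (abs_nonneg _) h1) h2 (norm_nonneg _) zero_le_one
      _ = C := one_mul C
  · exact intervalIntegrable_const
  · filter_upwards with t ht
    rw [Set.uIoc_of_le (zero_le_one)] at ht
    have hy : t * (x₀ - b) + b ∈ Set.Ioo u v :=
      aff_mem_of_convex (convex_Ioo u v) hb hx₀ ⟨ht.1.le, ht.2⟩
    have hφat : ContinuousAt φ (t * (x₀ - b) + b) :=
      hφc.continuousAt (isOpen_Ioo.mem_nhds hy)
    have hin : ContinuousAt (fun x : ℝ => t * (x - b) + b) x₀ :=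
      (aff_hasDerivAt t b x₀).differentiableAt.continuousAt
    exact continuousAt_const.mul
      (ContinuousAt.comp (f := fun x : ℝ => t * (x - b) + b) hφat hin)

/-- Differentiation under the integral sign for our parametric integral. -/
private lemma paramHasDerivAt {u v b : ℝ} (hb : b ∈ Set.Ioo u v) {φ ψ : ℝ → ℝ}
    (hφc : ContinuousOn φ (Set.Ioo u v)) (hψc : ContinuousOn ψ (Set.Ioo u v))
    (hd : ∀ y ∈ Set.Ioo u v, HasDerivAt φ (ψ y) y) (m : ℕ) {x₀ : ℝ} (hx₀ : x₀ ∈ Set.Ioo u v) :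
    HasDerivAt (fun x => ∫ t in (0:ℝ)..1, t ^ m * φ (t * (x - b) + b))
      (∫ t in (0:ℝ)..1, t ^ (m + 1) * ψ (t * (x₀ - b) + b)) x₀ := by
  obtain ⟨δ, hδ, K, hKc, hKconv, hKsub, hbK, hballK⟩ := exists_delta_K hb hx₀
  obtain ⟨C, hC⟩ := hKc.exists_bound_of_continuousOn (hψc.mono hKsub)
  refine (intervalIntegral.hasDerivAt_integral_of_dominated_loc_of_deriv_le
    (μ := volume)
    (F := fun x t => t ^ m * φ (t * (x - b) + b))
    (F' := fun x t => t ^ (m + 1) * ψ (t * (x - b) + b))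
    (bound := fun _ => C) (Metric.ball_mem_nhds x₀ hδ) ?_ ?_ ?_ ?_ ?_ ?_).2
  · filter_upwards [Metric.ball_mem_nhds x₀ hδ] with x hx
    exact integrand_meas hb hφc m (hKsub (hballK hx))
  · apply ContinuousOn.intervalIntegrable
    rw [Set.uIcc_of_le (zero_le_one)]
    exact integrand_contOn hb hφc m hx₀
  · exact integrand_meas hb hψc (m + 1) hx₀
  · filter_upwards with t ht x hx
    rw [Set.uIoc_of_le (zero_le_one)] at ht
    have hy : t * (x - b) + b ∈ K :=
      aff_mem_of_convex hKconv hbK (hballK hx) ⟨ht.1.le, ht.2⟩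
    have h1 : |t| ≤ 1 := abs_le.mpr ⟨by linarith [ht.1], ht.2⟩
    have h2 : ‖ψ (t * (x - b) + b)‖ ≤ C := hC _ hy
    calc ‖t ^ (m + 1) * ψ (t * (x - b) + b)‖ = |t| ^ (m + 1) * ‖ψ (t * (x - b) + b)‖ := by
          rw [norm_mul, Real.norm_eq_abs, abs_pow]
      _ ≤ 1 * C := mul_le_mul (pow_le_one₀ (abs_nonneg _) h1) h2 (norm_nonneg _) zero_le_one
      _ = C := one_mul C
  · exact intervalIntegrable_const
  · filter_upwards with t ht x hx
    rw [Set.uIoc_of_le (zero_le_one)] at ht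
    have hy : t * (x - b) + b ∈ Set.Ioo u v :=
      aff_mem_of_convex (convex_Ioo u v) hb (hKsub (hballK hx)) ⟨ht.1.le, ht.2⟩
    have h2 := (HasDerivAt.comp x (hd _ hy) (aff_hasDerivAt t b x)).const_mul (t ^ m)
    have h3 : t ^ (m + 1) * ψ (t * (x - b) + b) = t ^ m * (ψ (t * (x - b) + b) * t) := by ring
    rw [h3]
    exact h2

/-- auxiliary family of parametric integrals (`m`-th derivative candidates). -/
private noncomputable def Gaux (B : ℝ → ℝ) (b : ℝ) (m : ℕ) (x : ℝ) : ℝ :=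
  ∫ t in (0:ℝ)..1, t ^ m * iteratedDeriv (m + 1) B (t * (x - b) + b)

/-- inductive step in Lemma 4.3.  If `B` is `C^N` on an open interval
containing `[p,q]` with `ε·(−1)^m B^{(m)} < 0` on `[p,q]` for `1 ≤ m ≤ N`
(`ε = ±1`), and `b ∈ [p,q]`, then `B₁(λ) = ∫_0^1 B'(t(λ−b)+b) dt` equals the divided
difference `(B(λ)−B(b))/(λ−b)` for `λ ≠ b`, is `C^{N−1}` on `[p,q]`, and satisfies
`ε·(−1)^{1+m} B₁^{(m)}(λ) < 0` on `[p,q]` for `0 ≤ m ≤ N−1`. -/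
theorem stmt_6 (N : ℕ) (hN : 1 ≤ N) (p q : ℝ) (hpq : p < q)
    (ε : ℝ) (hε : ε = 1 ∨ ε = -1)
    (B : ℝ → ℝ) (u v : ℝ) (hu : u < p) (hv : q < v)
    (hB : ContDiffOn ℝ (↑N) B (Set.Ioo u v))
    (hBd : ∀ m, 1 ≤ m → m ≤ N → ∀ x ∈ Set.Icc p q,
      ε * ((-1 : ℝ) ^ m * iteratedDeriv m B x) < 0)
    (b : ℝ) (hb : b ∈ Set.Icc p q) :
    (∀ x ∈ Set.Icc p q, x ≠ b →
      (∫ t in (0:ℝ)..1, deriv B (t * (x - b) + b)) = (B x - B b) / (x - b)) ∧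
    ContDiffOn ℝ (↑(N - 1)) (fun x => ∫ t in (0:ℝ)..1, deriv B (t * (x - b) + b))
      (Set.Icc p q) ∧
    ∀ m, m ≤ N - 1 → ∀ x ∈ Set.Icc p q,
      ε * ((-1 : ℝ) ^ (1 + m) *
        iteratedDerivWithin m (fun y => ∫ t in (0:ℝ)..1, deriv B (t * (y - b) + b))
          (Set.Icc p q) x) < 0 := by
  have hO : IsOpen (Set.Ioo u v) := isOpen_Ioo
  have hIO : Set.Icc p q ⊆ Set.Ioo u v := Set.Icc_subset_Ioo hu hv
  have hbO : b ∈ Set.Ioo u v := hIO hb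
  have hUD : UniqueDiffOn ℝ (Set.Icc p q) := uniqueDiffOn_Icc hpq
  have hEq : ∀ k : ℕ, Set.EqOn (iteratedDerivWithin k B (Set.Ioo u v)) (iteratedDeriv k B)
      (Set.Ioo u v) := by
    intro k x hx
    rw [iteratedDerivWithin_eq_iteratedFDerivWithin, iteratedDeriv_eq_iteratedFDeriv,
      iteratedFDerivWithin_of_isOpen k hO hx]
  have hWc : ∀ k : ℕ, k ≤ N → ContinuousOn (iteratedDeriv k B) (Set.Ioo u v) := by
    intro k hk
    exact (hB.continuousOn_iteratedDerivWithin (by exact_mod_cast hk)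
      hO.uniqueDiffOn).congr (hEq k).symm
  have hWd : ∀ k : ℕ, k < N → ∀ x ∈ Set.Ioo u v,
      HasDerivAt (iteratedDeriv k B) (iteratedDeriv (k + 1) B x) x := by
    intro k hk x hx
    have hdiff : DifferentiableWithinAt ℝ (iteratedDerivWithin k B (Set.Ioo u v))
        (Set.Ioo u v) x :=
      hB.differentiableOn_iteratedDerivWithin (by exact_mod_cast hk) hO.uniqueDiffOn x hx
    have hEv : iteratedDerivWithin k B (Set.Ioo u v) =ᶠ[nhds x] iteratedDeriv k B :=
      Filter.eventuallyEq_of_mem (hO.mem_nhds hx) (hEq k)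
    have h2 : DifferentiableAt ℝ (iteratedDeriv k B) x :=
      hEv.differentiableAt_iff.mp (hdiff.differentiableAt (hO.mem_nhds hx))
    rw [iteratedDeriv_succ]
    exact h2.hasDerivAt
  have hGd : ∀ m : ℕ, m + 2 ≤ N → ∀ x ∈ Set.Ioo u v,
      HasDerivAt (Gaux B b m) (Gaux B b (m + 1) x) x := by
    intro m hm x hx
    show HasDerivAt (fun x => ∫ t in (0:ℝ)..1, t ^ m * iteratedDeriv (m + 1) B (t * (x - b) + b))
      (∫ t in (0:ℝ)..1, t ^ (m + 1) * iteratedDeriv (m + 2) B (t * (x - b) + b)) x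
    exact paramHasDerivAt hbO (hWc (m + 1) (by omega)) (hWc (m + 2) hm)
      (fun y hy => hWd (m + 1) (by omega) y hy) m hx
  have hGc : ∀ m : ℕ, m + 1 ≤ N → ContinuousOn (Gaux B b m) (Set.Icc p q) := by
    intro m hm x hx
    exact (paramContinuousAt hbO (hWc (m + 1) hm) m (hIO hx)).continuousWithinAt
  have hG0 : Gaux B b 0 = fun x => ∫ t in (0:ℝ)..1, deriv B (t * (x - b) + b) := by
    funext x
    simp [Gaux, iteratedDeriv_one]
  have hIter : ∀ m : ℕ, m + 1 ≤ N → Set.EqOn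
      (iteratedDerivWithin m (fun y => ∫ t in (0:ℝ)..1, deriv B (t * (y - b) + b))
        (Set.Icc p q)) (Gaux B b m) (Set.Icc p q) := by
    intro m
    induction m with
    | zero =>
      intro _ x hx
      rw [iteratedDerivWithin_zero, hG0]
    | succ m ih =>
      intro hm x hx
      rw [iteratedDerivWithin_succ,
        derivWithin_congr (ih (by omega)) (ih (by omega) hx)]
      exact ((hGd m (by omega) x (hIO hx)).hasDerivWithinAt).derivWithin (hUD x hx)
  refine ⟨?_, ?_, ?_⟩
  · -- divided difference formula
    intro x hx hxb
    have hc : x - b ≠ 0 := sub_ne_zero.mpr hxb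
    have huIcc : Set.uIcc b x ⊆ Set.Ioo u v :=
      (Set.uIcc_subset_Icc hb hx).trans hIO
    have hdiffB : ∀ y ∈ Set.uIcc b x, DifferentiableAt ℝ B y := by
      intro y hy
      exact (hB.differentiableOn (by exact_mod_cast (show N ≠ 0 by omega)) y (huIcc hy)).differentiableAt
        (hO.mem_nhds (huIcc hy))
    have hderivcont : ContinuousOn (deriv B) (Set.uIcc b x) := by
      have h := (hWc 1 hN).mono huIcc
      rwa [iteratedDeriv_one] at h
    have step1 : (∫ t in (0:ℝ)..1, deriv B (t * (x - b) + b))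
        = ∫ t in (0:ℝ)..1, deriv B ((x - b) * t + b) := by
      apply intervalIntegral.integral_congr
      intro t _
      exact congrArg (deriv B) (by ring)
    rw [step1, intervalIntegral.integral_comp_mul_add (deriv B) hc b]
    have hbound : (x - b) * 0 + b = b := by ring
    have hbound2 : (x - b) * 1 + b = x := by ring
    rw [hbound, hbound2,
      intervalIntegral.integral_deriv_eq_sub hdiffB (hderivcont.intervalIntegrable),
      smul_eq_mul, inv_mul_eq_div]

  · -- smoothness
    rw [contDiffOn_nat_iff_continuousOn_differentiableOn_deriv hUD]
    constructor
    · intro m hm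
      exact (hGc m (by omega)).congr (hIter m (by omega))
    · intro m hm
      have hd : DifferentiableOn ℝ (Gaux B b m) (Set.Icc p q) := fun y hy =>
        ((hGd m (by omega) y (hIO hy)).differentiableAt).differentiableWithinAt
      exact hd.congr (fun x hx => hIter m (by omega) hx)
  · -- sign
    intro m hm x hx
    rw [add_comm 1 m, hIter m (by omega) hx]
    have key : ∀ t ∈ Set.Ioo (0:ℝ) 1,
        0 < (-(ε * (-1:ℝ) ^ (m + 1))) * (t ^ m * iteratedDeriv (m + 1) B (t * (x - b) + b)) := by
      intro t ht
      have hy : t * (x - b) + b ∈ Set.Icc p q :=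
        aff_mem_of_convex (convex_Icc p q) hb hx ⟨ht.1.le, ht.2.le⟩
      have hsign := hBd (m + 1) (by omega) (by omega) _ hy
      have htm : (0:ℝ) < t ^ m := pow_pos ht.1 m
      nlinarith [mul_pos htm (neg_pos.mpr hsign)]
    have hconts : ContinuousOn
        (fun t => (-(ε * (-1:ℝ) ^ (m + 1))) * (t ^ m * iteratedDeriv (m + 1) B (t * (x - b) + b)))
        (Set.uIcc (0:ℝ) 1) := by
      rw [Set.uIcc_of_le (zero_le_one)]
      exact continuousOn_const.mul (integrand_contOn hbO (hWc (m + 1) (by omega)) m (hIO hx))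
    have hpos := intervalIntegral_pos_of_pos_on hconts.intervalIntegrable key zero_lt_one
    rw [intervalIntegral.integral_const_mul] at hpos
    have hG : Gaux B b m x = ∫ t in (0:ℝ)..1, t ^ m * iteratedDeriv (m + 1) B (t * (x - b) + b) :=
      rfl
    rw [hG]
    nlinarith [hpos]
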